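/- Under the hypotheses of the approximate alignment lemma — X, Y ∈ ℝ^{nd×d} with invertible d×d blocks, X̃ = sgn(X), Ỹ = sgn(Y) blockwise, X, Y, X̃, Ỹ ∈ N_{2ε}, ‖X − X̃‖_F ≤ e_F ≤ √n, ‖Y − Ỹ‖_F ≤ e_F, ε ≤ 1/(4√2) — the optimal alignment rotations Q = sgn(YᵀX) and Q̃ = sgn(ỸᵀX̃) satisfy n·‖Q̃ − Q‖_F ≤ 9√n · e_F. -/

import Mathlib

open Matrix MeasureTheory ProbabilityTheory

noncomputable section

/-- Frobenius norm of a real matrix. -/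
def frob {m k : Type*} [Fintype m] [Fintype k] (A : Matrix m k ℝ) : ℝ :=
  Real.sqrt (∑ i, ∑ j, (A i j) ^ 2)

/-- Spectral (operator) norm of a real matrix: the `ℓ² → ℓ²` operator norm. -/
def spec {m k : Type*} [Fintype m] [Fintype k] [DecidableEq k] (A : Matrix m k ℝ) : ℝ :=
  ‖LinearMap.toContinuousLinearMap (Matrix.toEuclideanLin A)‖

/-- Smallest singular value of a real matrix. -/
def sigmaMin {m k : Type*} [Fintype m] [Fintype k] [DecidableEq k] (A : Matrix m k ℝ) : ℝ :=
  ⨅ x : {x : EuclideanSpace ℝ k // ‖x‖ = 1}, ‖Matrix.toEuclideanLin A x.1‖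

/-- Nuclear norm (sum of singular values) of a square real matrix. -/
def nuclearNorm {d : ℕ} (A : Matrix (Fin d) (Fin d) ℝ) : ℝ :=
  ∑ i, Real.sqrt ((show (Aᵀ * A).IsHermitian by
    simpa using Matrix.isHermitian_conjTranspose_mul_self A).eigenvalues i)

/-- `Q` is a `d × d` real orthogonal matrix. -/
def IsOrtho {d : ℕ} (Q : Matrix (Fin d) (Fin d) ℝ) : Prop :=
  Qᵀ * Q = 1 ∧ Q * Qᵀ = 1

open scoped Classical in
/-- The matrix sign function `sgn(A) = A (AᵀA)^{-1/2} = U Vᵀ` for `A = U Σ Vᵀ`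
(junk value if `AᵀA` is not positive semidefinite, which never happens over `ℝ`). -/
def msgn {d : ℕ} (A : Matrix (Fin d) (Fin d) ℝ) : Matrix (Fin d) (Fin d) ℝ :=
  if h : (Aᵀ * A).PosSemidef then A * (h.1.eigenvectorUnitary.1 *
    diagonal ((RCLike.ofReal : ℝ → ℝ) ∘ Real.sqrt ∘ h.1.eigenvalues) *
    (star h.1.eigenvectorUnitary : Matrix (Fin d) (Fin d) ℝ))⁻¹ else 1

/-- The `i`-th `d × d` block of an `nd × d` block matrix. -/
def blk {d n : ℕ} (X : Matrix (Fin n × Fin d) (Fin d) ℝ) (i : Fin n) :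
    Matrix (Fin d) (Fin d) ℝ :=
  Matrix.of fun a b => X (i, a) b

/-- `X ∈ O(d)^{⊗n}`: every `d × d` block of `X` is orthogonal. -/
def BlockOrtho {d n : ℕ} (X : Matrix (Fin n × Fin d) (Fin d) ℝ) : Prop :=
  ∀ i, IsOrtho (blk X i)

/-- Blockwise matrix sign function on `nd × d` block matrices. -/
def bsgn {d n : ℕ} (X : Matrix (Fin n × Fin d) (Fin d) ℝ) :
    Matrix (Fin n × Fin d) (Fin d) ℝ :=
  Matrix.of fun p b => msgn (blk X p.1) p.2 b

/-- `d_F(X, Y) = min_{Q ∈ O(d)} ‖X - Y Q‖_F`. -/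
def dF {d n : ℕ} (X Y : Matrix (Fin n × Fin d) (Fin d) ℝ) : ℝ :=
  ⨅ Q : {Q : Matrix (Fin d) (Fin d) ℝ // IsOrtho Q}, frob (X - Y * Q.1)

/-- The `(i, j)` block of an `nd × nd` block matrix. -/
def blk2 {d n : ℕ} (A : Matrix (Fin n × Fin d) (Fin n × Fin d) ℝ) (i j : Fin n) :
    Matrix (Fin d) (Fin d) ℝ :=
  Matrix.of fun a b => A (i, a) (j, b)

/-- The `l`-th `nd × d` block column of an `nd × nd` block matrix. -/
def bcol {d n : ℕ} (W : Matrix (Fin n × Fin d) (Fin n × Fin d) ℝ) (l : Fin n) :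
    Matrix (Fin n × Fin d) (Fin d) ℝ :=
  Matrix.of fun p b => W p (l, b)

/-- Projection onto the tangent space of `O(d)` at `X`: `P_{T_X}(G) = (G - X Gᵀ X)/2`. -/
def tanProj {d : ℕ} (X G : Matrix (Fin d) (Fin d) ℝ) : Matrix (Fin d) (Fin d) ℝ :=
  (1 / 2 : ℝ) • (G - X * Gᵀ * X)

/-- The `i`-th block of the Euclidean gradient: `G_i = ∑_{j ≠ i} (X_i - A_{ij} X_j)`. -/
def Gblk {d n : ℕ} (A : Matrix (Fin n × Fin d) (Fin n × Fin d) ℝ)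
    (X : Matrix (Fin n × Fin d) (Fin d) ℝ) (i : Fin n) : Matrix (Fin d) (Fin d) ℝ :=
  ∑ j ∈ Finset.univ.erase i, (blk X i - blk2 A i j * blk X j)

/-- One Riemannian gradient step before retraction:
`F_i = X_i - μ P_{T_{X_i}}(G_i)`, assembled as an `nd × d` block matrix. -/
def Fstep {d n : ℕ} (A : Matrix (Fin n × Fin d) (Fin n × Fin d) ℝ) (μ : ℝ)
    (X : Matrix (Fin n × Fin d) (Fin d) ℝ) : Matrix (Fin n × Fin d) (Fin d) ℝ :=
  Matrix.of fun p b => (blk X p.1 - μ • tanProj (blk X p.1) (Gblk A X p.1)) p.2 b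

/-- `Y` is an orthonormal matrix of eigenvectors for the top `d` eigenvalues of the
symmetric matrix `A`: its columns are orthonormal, its range is `A`-invariant, and the
Rayleigh quotient on its range dominates the Rayleigh quotient on its orthogonal
complement. -/
def IsTopEigvecs {d n : ℕ} (A : Matrix (Fin n × Fin d) (Fin n × Fin d) ℝ)
    (Y : Matrix (Fin n × Fin d) (Fin d) ℝ) : Prop :=
  Yᵀ * Y = 1 ∧ (∃ Λ : Matrix (Fin d) (Fin d) ℝ, A * Y = Y * Λ) ∧
  ∀ v w : (Fin n × Fin d) → ℝ, (∃ c : Fin d → ℝ, v = Y.mulVec c) → Yᵀ.mulVec w = 0 →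
    (w ⬝ᵥ w) * (v ⬝ᵥ A.mulVec v) ≥ (v ⬝ᵥ v) * (w ⬝ᵥ A.mulVec w)

/-- `W` is the symmetric block Gaussian noise matrix: `W` is symmetric, its diagonal
blocks vanish, each entry in an off-diagonal block `W_{ij}` (`i < j`) is standard
Gaussian, and all these entries (over all blocks with `i < j`) are mutually
independent. -/
def IsGaussianNoise {d n : ℕ} {Ω : Type*} [MeasurableSpace Ω] (P : Measure Ω)
    (W : Ω → Matrix (Fin n × Fin d) (Fin n × Fin d) ℝ) : Prop :=
  (∀ p q, Measurable fun ω => W ω p q) ∧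
  (∀ ω, (W ω)ᵀ = W ω) ∧
  (∀ ω (i : Fin n) (a b : Fin d), W ω (i, a) (i, b) = 0) ∧
  (∀ (i j : Fin n) (a b : Fin d), i < j →
    P.map (fun ω => W ω (i, a) (j, b)) = gaussianReal 0 1) ∧
  iIndepFun
    (fun (e : {x : (Fin n × Fin d) × (Fin n × Fin d) // x.1.1 < x.2.1}) ω =>
      W ω e.1.1 e.1.2) P

/-- Leave-one-out noise: set the `l`-th block row and block column of `W` to zero. -/
def looNoise {d n : ℕ} (W : Matrix (Fin n × Fin d) (Fin n × Fin d) ℝ) (l : Fin n) :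
    Matrix (Fin n × Fin d) (Fin n × Fin d) ℝ :=
  Matrix.of fun p q => if p.1 = l ∨ q.1 = l then 0 else W p q

/-- The Newton–Schulz iteration `S_0 = A`, `S_{t+1} = ½ S_t (3 I - S_tᵀ S_t)`. -/
def nsIter {d : ℕ} (A : Matrix (Fin d) (Fin d) ℝ) : ℕ → Matrix (Fin d) (Fin d) ℝ
  | 0 => A
  | (t + 1) => (1 / 2 : ℝ) • (nsIter A t * ((3 : ℝ) • (1 : Matrix (Fin d) (Fin d) ℝ) - (nsIter A t)ᵀ * nsIter A t))



namespace OptRot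

variable {m k l : Type*} [Fintype m] [Fintype k] [Fintype l]

/-! ### Euclidean norm of vectors and Frobenius norm basics -/

def en {m : Type*} [Fintype m] (v : m → ℝ) : ℝ := Real.sqrt (v ⬝ᵥ v)

lemma dot_self_nonneg (v : m → ℝ) : 0 ≤ v ⬝ᵥ v :=
  Finset.sum_nonneg fun _ _ => mul_self_nonneg _

lemma en_nonneg (v : m → ℝ) : 0 ≤ en v := Real.sqrt_nonneg _

lemma en_sq (v : m → ℝ) : en v ^ 2 = v ⬝ᵥ v := Real.sq_sqrt (dot_self_nonneg v)

lemma dot_CS (v w : m → ℝ) : v ⬝ᵥ w ≤ en v * en w := by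
  have := Real.sum_mul_le_sqrt_mul_sqrt Finset.univ v w
  simpa [en, dotProduct, sq] using this

lemma en_add_le (v w : m → ℝ) : en (v + w) ≤ en v + en w := by
  have h1 : (v + w) ⬝ᵥ (v + w) ≤ (en v + en w) ^ 2 := by
    have hcs := dot_CS v w
    have := en_sq v; have := en_sq w
    simp only [dotProduct_add, add_dotProduct] at *
    nlinarith [dotProduct_comm v w]
  calc en (v + w) ≤ Real.sqrt ((en v + en w) ^ 2) := Real.sqrt_le_sqrt h1
    _ = en v + en w := Real.sqrt_sq (by have := en_nonneg v; have := en_nonneg w; linarith)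

lemma en_neg (v : m → ℝ) : en (-v) = en v := by simp [en]

lemma en_sub_le (v w : m → ℝ) : en (v - w) ≤ en v + en w := by
  have := en_add_le v (-w); simpa [en_neg, sub_eq_add_neg] using this

lemma en_lower (v w : m → ℝ) : en v - en w ≤ en (v + w) := by
  have := en_add_le (v + w) (-w); simp [en_neg] at this; linarith

lemma frob_nonneg (A : Matrix m k ℝ) : 0 ≤ frob A := Real.sqrt_nonneg _

lemma frob_sq (A : Matrix m k ℝ) : frob A ^ 2 = ∑ i, ∑ j, (A i j) ^ 2 :=
  Real.sq_sqrt (by positivity)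

lemma frob_transpose (A : Matrix m k ℝ) : frob Aᵀ = frob A := by
  rw [frob, frob, Finset.sum_comm]; rfl

lemma frob_neg (A : Matrix m k ℝ) : frob (-A) = frob A := by simp [frob]

lemma frob_sub_comm (A B : Matrix m k ℝ) : frob (A - B) = frob (B - A) := by
  rw [← frob_neg (A - B)]; congr 1; abel

lemma trace_transpose_mul (A B : Matrix m k ℝ) :
    Matrix.trace (Aᵀ * B) = ∑ i, ∑ j, A i j * B i j := by
  rw [Matrix.trace, Finset.sum_comm]
  simp [Matrix.diag, Matrix.mul_apply, Matrix.transpose_apply]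

lemma trace_CS (A B : Matrix m k ℝ) : Matrix.trace (Aᵀ * B) ≤ frob A * frob B := by
  rw [trace_transpose_mul]
  have h := Real.sum_mul_le_sqrt_mul_sqrt (Finset.univ : Finset (m × k))
      (fun p => A p.1 p.2) (fun p => B p.1 p.2)
  simp only [← Finset.univ_product_univ, Finset.sum_product] at h
  exact h

lemma frob_add_le (A B : Matrix m k ℝ) : frob (A + B) ≤ frob A + frob B := by
  have hAB : ∑ i, ∑ j, ((A + B) i j) ^ 2 ≤ (frob A + frob B) ^ 2 := by
    have hcs : ∑ i, ∑ j, A i j * B i j ≤ frob A * frob B :=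
      trace_transpose_mul A B ▸ trace_CS A B
    have hA := frob_sq A; have hB := frob_sq B
    have : ∑ i, ∑ j, ((A + B) i j) ^ 2
        = (∑ i, ∑ j, (A i j)^2) + 2 * (∑ i, ∑ j, A i j * B i j) + (∑ i, ∑ j, (B i j)^2) := by
      simp only [Matrix.add_apply, ← Finset.sum_product']
      rw [Finset.mul_sum, ← Finset.sum_add_distrib, ← Finset.sum_add_distrib]
      exact Finset.sum_congr rfl fun p _ => by ring
    rw [this]; nlinarith
  calc frob (A + B) ≤ Real.sqrt ((frob A + frob B) ^ 2) := Real.sqrt_le_sqrt hAB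
    _ = frob A + frob B := Real.sqrt_sq (by have := frob_nonneg A; have := frob_nonneg B; linarith)

lemma en_mulVec_sq_le (A : Matrix m k ℝ) (v : k → ℝ) :
    (A *ᵥ v) ⬝ᵥ (A *ᵥ v) ≤ frob A ^ 2 * (v ⬝ᵥ v) := by
  rw [frob_sq, dotProduct, Finset.sum_mul]
  refine Finset.sum_le_sum fun i _ => ?_
  have h := Finset.sum_mul_sq_le_sq_mul_sq Finset.univ (fun j => A i j) v
  calc (A *ᵥ v) i * (A *ᵥ v) i = (∑ j, A i j * v j) ^ 2 := by
        simp [Matrix.mulVec, dotProduct, sq]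
    _ ≤ (∑ j, A i j ^ 2) * ∑ j, v j ^ 2 := h
    _ = (∑ j, A i j ^ 2) * (v ⬝ᵥ v) := by simp [dotProduct, sq]

lemma en_mulVec_le (A : Matrix m k ℝ) (v : k → ℝ) : en (A *ᵥ v) ≤ frob A * en v := by
  have h := en_mulVec_sq_le A v
  calc en (A *ᵥ v) ≤ Real.sqrt (frob A ^ 2 * (v ⬝ᵥ v)) := Real.sqrt_le_sqrt h
    _ = frob A * en v := by
        rw [Real.sqrt_mul (by positivity), Real.sqrt_sq (frob_nonneg A)]; rfl

lemma frob_transpose_mul_le {c : ℝ} (A : Matrix m k ℝ) (E : Matrix m l ℝ)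
    (h : ∀ w : m → ℝ, (Aᵀ *ᵥ w) ⬝ᵥ (Aᵀ *ᵥ w) ≤ c * (w ⬝ᵥ w)) :
    frob (Aᵀ * E) ^ 2 ≤ c * frob E ^ 2 := by
  rw [frob_sq, frob_sq, Finset.sum_comm, Finset.sum_comm (γ := m)]
  rw [Finset.mul_sum]
  refine Finset.sum_le_sum fun b _ => ?_
  have := h (fun p => E p b)
  calc ∑ a, (Aᵀ * E) a b ^ 2 = (Aᵀ *ᵥ fun p => E p b) ⬝ᵥ (Aᵀ *ᵥ fun p => E p b) := by
        simp [dotProduct, Matrix.mul_apply, Matrix.mulVec, sq]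
    _ ≤ c * ((fun p => E p b) ⬝ᵥ fun p => E p b) := this
    _ = c * ∑ a, E a b ^ 2 := by simp [dotProduct, sq]

lemma le_of_sq_le {a c : ℝ} (ha : 0 ≤ a) (hc : 0 ≤ c) (h : a ^ 2 ≤ c ^ 2) : a ≤ c := by
  nlinarith

lemma dot_mulVec_left (A : Matrix m k ℝ) (v : m → ℝ) (w : k → ℝ) :
    v ⬝ᵥ (A *ᵥ w) = (Aᵀ *ᵥ v) ⬝ᵥ w := by
  rw [Matrix.dotProduct_mulVec, Matrix.mulVec_transpose]

lemma quad_of_gram [DecidableEq k] {c : ℝ} (Y : Matrix m k ℝ) (hY : Yᵀ * Y = c • (1 : Matrix k k ℝ))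
    (hc : 0 ≤ c) (w : m → ℝ) :
    (Yᵀ *ᵥ w) ⬝ᵥ (Yᵀ *ᵥ w) ≤ c * (w ⬝ᵥ w) := by
  set u := Yᵀ *ᵥ w with hu
  set t := u ⬝ᵥ u with ht
  have ht0 : 0 ≤ t := dot_self_nonneg u
  have hYu : (Y *ᵥ u) ⬝ᵥ (Y *ᵥ u) = c * t := by
    rw [dot_mulVec_left, Matrix.mulVec_mulVec, hY, Matrix.smul_mulVec,
      Matrix.one_mulVec, smul_dotProduct, smul_eq_mul, ht]
  have htw : t = w ⬝ᵥ (Y *ᵥ u) := by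
    rw [dot_mulVec_left, ← hu]
  have hCS : t ≤ en w * en (Y *ᵥ u) := htw ▸ dot_CS w (Y *ᵥ u)
  have h2 : t ^ 2 ≤ (w ⬝ᵥ w) * (c * t) := by
    nlinarith [en_nonneg w, en_nonneg (Y *ᵥ u), en_sq w, en_sq (Y *ᵥ u), hCS, ht0, hYu]
  nlinarith [dot_self_nonneg w, mul_nonneg hc (dot_self_nonneg w), ht0, h2]

/-! ### PSD facts -/

variable {k' : Type*} [Fintype k'] [DecidableEq k']

lemma psd_trace_nonneg {P : Matrix k' k' ℝ} (hP : P.PosSemidef) : 0 ≤ Matrix.trace P := by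
  refine Finset.sum_nonneg fun i _ => ?_
  have := hP.dotProduct_mulVec_nonneg (Pi.single i 1)
  simpa [dotProduct_single, Matrix.mulVec_single] using this

lemma psd_sqrt_aux {S : Matrix k' k' ℝ} (hS : S.PosSemidef) :
    (hS.1.eigenvectorUnitary.1 * diagonal ((RCLike.ofReal : ℝ → ℝ) ∘ Real.sqrt ∘ hS.1.eigenvalues) *
      (star hS.1.eigenvectorUnitary : Matrix k' k' ℝ)).PosSemidef ∧
    (hS.1.eigenvectorUnitary.1 * diagonal ((RCLike.ofReal : ℝ → ℝ) ∘ Real.sqrt ∘ hS.1.eigenvalues) *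
      (star hS.1.eigenvectorUnitary : Matrix k' k' ℝ)) *
    (hS.1.eigenvectorUnitary.1 * diagonal ((RCLike.ofReal : ℝ → ℝ) ∘ Real.sqrt ∘ hS.1.eigenvalues) *
      (star hS.1.eigenvectorUnitary : Matrix k' k' ℝ)) = S := by
  set U := hS.1.eigenvectorUnitary with hUdef
  set D := diagonal ((RCLike.ofReal : ℝ → ℝ) ∘ Real.sqrt ∘ hS.1.eigenvalues) with hDdef
  have hUs : ((star U : unitary (Matrix k' k' ℝ)) : Matrix k' k' ℝ) = (U.1)ᴴ := by
    rw [Unitary.coe_star, Matrix.star_eq_conjTranspose]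
  constructor
  · have hD : D.PosSemidef := PosSemidef.diagonal (fun i => by simp [Real.sqrt_nonneg])
    have := hD.mul_mul_conjTranspose_same U.1
    rw [Matrix.star_eq_conjTranspose]; exact this
  · have hsp := hS.1.spectral_theorem
    rw [Unitary.conjStarAlgAut_apply] at hsp
    have hUU : star U.1 * U.1 = 1 := by
      simpa using Unitary.coe_star_mul_self U
    have hDD : D * D = diagonal ((RCLike.ofReal : ℝ → ℝ) ∘ hS.1.eigenvalues) := by
      rw [hDdef, diagonal_mul_diagonal]; congr 1; funext i
      simp [Real.mul_self_sqrt (hS.eigenvalues_nonneg i)]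
    calc U.1 * D * star U.1 * (U.1 * D * star U.1)
        = U.1 * (D * (star U.1 * U.1) * D) * star U.1 := by
          simp only [Matrix.mul_assoc]
      _ = S := by rw [hUU, Matrix.mul_one, hDD]; exact hsp.symm

lemma psd_trace_mul_nonneg {S P : Matrix k' k' ℝ} (hS : S.PosSemidef) (hP : P.PosSemidef) :
    0 ≤ Matrix.trace (S * P) := by
  obtain ⟨R, hs, hRR⟩ : ∃ R : Matrix k' k' ℝ, R.PosSemidef ∧ R * R = S := ⟨_, psd_sqrt_aux hS⟩
  have h1 : S = R * R := hRR.symm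
  rw [h1, Matrix.mul_assoc, Matrix.trace_mul_comm]
  have h2 : Rᴴ = R := hs.1
  have : (R * P * Rᴴ).PosSemidef := hP.mul_mul_conjTranspose_same R
  rw [h2] at this
  exact psd_trace_nonneg this

lemma psd_trace_mul_ge {S P : Matrix k' k' ℝ} {c : ℝ} (hS : S.PosSemidef)
    (hP : (P - c • (1 : Matrix k' k' ℝ)).PosSemidef) :
    c * Matrix.trace S ≤ Matrix.trace (S * P) := by
  have h := psd_trace_mul_nonneg hS hP
  rw [Matrix.mul_sub, Matrix.trace_sub, Matrix.mul_smul, Matrix.mul_one, Matrix.trace_smul] at h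
  simp only [smul_eq_mul] at h
  linarith

lemma psd_sub_smul {P : Matrix k' k' ℝ} (hP : P.PosSemidef) {c : ℝ} (hc : 0 ≤ c)
    (h : ∀ v : k' → ℝ, c ^ 2 * (v ⬝ᵥ v) ≤ v ⬝ᵥ (P * P) *ᵥ v) :
    (P - c • (1 : Matrix k' k' ℝ)).PosSemidef := by
  have hT : (P - c • (1 : Matrix k' k' ℝ)).IsHermitian := by
    refine hP.1.sub ?_
    simp [Matrix.IsHermitian]
  refine hT.posSemidef_iff_eigenvalues_nonneg.mpr fun i => ?_
  set w : k' → ℝ := ⇑(hT.eigenvectorBasis i) with hw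
  set t : ℝ := hT.eigenvalues i with ht
  have hww : w ⬝ᵥ w = 1 := by
    have h1 : ‖hT.eigenvectorBasis i‖ = 1 := hT.eigenvectorBasis.orthonormal.1 i
    rw [EuclideanSpace.norm_eq] at h1
    have h2 : ∑ j, w j ^ 2 = 1 := by
      have := congrArg (· ^ 2) h1
      simpa [Real.sq_sqrt (Finset.sum_nonneg fun j _ => sq_nonneg _), sq_abs] using this
    simpa [dotProduct, sq] using h2
  have hTw : (P - c • (1 : Matrix k' k' ℝ)) *ᵥ w = t • w := by
    simpa [hw, ht] using hT.mulVec_eigenvectorBasis i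
  have hPw : P *ᵥ w = (t + c) • w := by
    rw [Matrix.sub_mulVec, Matrix.smul_mulVec, Matrix.one_mulVec] at hTw
    have h3 : P *ᵥ w = t • w + c • w := by rw [← hTw]; abel
    rw [h3, ← add_smul]
  have htc0 : 0 ≤ t + c := by
    have h0 := hP.dotProduct_mulVec_nonneg w
    rw [hPw] at h0
    simp only [star_trivial, dotProduct_smul, smul_eq_mul, hww, mul_one] at h0
    exact h0
  have hsq : c ^ 2 ≤ (t + c) ^ 2 := by
    have h1 := h w
    rw [← Matrix.mulVec_mulVec, hPw] at h1
    have h2 : P *ᵥ (t + c) • w = ((t + c) * (t + c)) • w := by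
      rw [Matrix.mulVec_smul, hPw, smul_smul]
    rw [h2] at h1
    simp only [dotProduct_smul, smul_eq_mul, hww, mul_one] at h1
    nlinarith
  show (0:ℝ) ≤ t
  nlinarith

end OptRot

namespace OptRot

/-! ### Facts about `msgn`, blocks and `dF` -/

lemma psd_ata {d : ℕ} (A : Matrix (Fin d) (Fin d) ℝ) : (Aᵀ * A).PosSemidef := by
  have := Matrix.posSemidef_conjTranspose_mul_self A
  rwa [Matrix.conjTranspose_eq_transpose_of_trivial] at this

lemma msgn_spec {d : ℕ} {A : Matrix (Fin d) (Fin d) ℝ} (hA : IsUnit A.det) :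
    ∃ P : Matrix (Fin d) (Fin d) ℝ, P.PosSemidef ∧ P * P = Aᵀ * A ∧
      (msgn A)ᵀ * msgn A = 1 ∧ (msgn A)ᵀ * A = P ∧ msgn A * P = A := by
  have h := psd_ata A
  set P := h.1.eigenvectorUnitary.1 *
    diagonal ((RCLike.ofReal : ℝ → ℝ) ∘ Real.sqrt ∘ h.1.eigenvalues) *
    (star h.1.eigenvectorUnitary : Matrix (Fin d) (Fin d) ℝ) with hPdef
  have hmsgn : msgn A = A * P⁻¹ := by
    rw [msgn, dif_pos h]
  have hPsd : P.PosSemidef := (psd_sqrt_aux h).1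
  have hPP : P * P = Aᵀ * A := (psd_sqrt_aux h).2
  have hPH : Pᵀ = P := by
    have h2 := hPsd.1
    rw [← Matrix.conjTranspose_eq_transpose_of_trivial]
    exact h2
  have hdetP : IsUnit P.det := by
    have : P.det * P.det = A.det * A.det := by
      have := congrArg Matrix.det hPP
      simpa [Matrix.det_mul, Matrix.det_transpose, mul_comm] using this
    rw [isUnit_iff_ne_zero] at hA ⊢
    intro h0
    rw [h0, mul_zero] at this
    exact hA (by nlinarith [this.symm])
  have hPinv : P⁻¹ * P = 1 := Matrix.nonsing_inv_mul P hdetP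
  have hPinv' : P * P⁻¹ = 1 := Matrix.mul_nonsing_inv P hdetP
  have hQt : (msgn A)ᵀ = P⁻¹ * Aᵀ := by
    rw [hmsgn, Matrix.transpose_mul, Matrix.transpose_nonsing_inv, hPH]
  refine ⟨P, hPsd, hPP, ?_, ?_, ?_⟩
  · rw [hQt, hmsgn, Matrix.mul_assoc P⁻¹ Aᵀ, ← Matrix.mul_assoc Aᵀ A, ← hPP,
      Matrix.mul_assoc P P P⁻¹, hPinv', Matrix.mul_one, hPinv]
  · rw [hQt, Matrix.mul_assoc, ← hPP, ← Matrix.mul_assoc, hPinv, Matrix.one_mul]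
  · rw [hmsgn, Matrix.mul_assoc, hPinv, Matrix.mul_one]

lemma transpose_mul_eq_sum_blk {d n : ℕ} (M N : Matrix (Fin n × Fin d) (Fin d) ℝ) :
    Mᵀ * N = ∑ i, (blk M i)ᵀ * blk N i := by
  ext a b
  simp only [Matrix.mul_apply, Matrix.sum_apply, Matrix.transpose_apply, blk, Matrix.of_apply]
  rw [← Finset.univ_product_univ, Finset.sum_product]

lemma blk_bsgn {d n : ℕ} (Y : Matrix (Fin n × Fin d) (Fin d) ℝ) (i : Fin n) :
    blk (bsgn Y) i = msgn (blk Y i) := rfl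

lemma gram_of_blocks {d n : ℕ} {M : Matrix (Fin n × Fin d) (Fin d) ℝ}
    (h : ∀ i, (blk M i)ᵀ * blk M i = 1) :
    Mᵀ * M = (n : ℝ) • (1 : Matrix (Fin d) (Fin d) ℝ) := by
  rw [transpose_mul_eq_sum_blk]
  simp only [h]
  simp [Finset.sum_const, Finset.card_univ, Nat.cast_smul_eq_nsmul]

lemma dF_extract {d n : ℕ} (X Z : Matrix (Fin n × Fin d) (Fin d) ℝ) {a : ℝ}
    (hle : dF X Z ≤ a) :
    ∃ Q : Matrix (Fin d) (Fin d) ℝ, IsOrtho Q ∧ frob (X - Z * Q) < a + 1/48 := by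
  have hne : Nonempty {Q : Matrix (Fin d) (Fin d) ℝ // IsOrtho Q} :=
    ⟨⟨1, by constructor <;> simp⟩⟩
  have hlt : dF X Z < a + 1/48 := lt_of_le_of_lt hle (by linarith)
  obtain ⟨Q, hQ⟩ := exists_lt_of_ciInf_lt hlt
  exact ⟨Q.1, Q.2, hQ⟩

lemma align_dot {d n : ℕ} (Z U V : Matrix (Fin n × Fin d) (Fin d) ℝ)
    {Qu Qv : Matrix (Fin d) (Fin d) ℝ}
    (hQu : IsOrtho Qu) (hQv : IsOrtho Qv) (v : Fin d → ℝ) :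
    ∃ u : Fin d → ℝ, u ⬝ᵥ u = v ⬝ᵥ v ∧
      u ⬝ᵥ ((Uᵀ * V) *ᵥ v) = (U *ᵥ u) ⬝ᵥ (V *ᵥ v) ∧
      U *ᵥ u - V *ᵥ v = (U - Z * Qu) *ᵥ u - (V - Z * Qv) *ᵥ v := by
  refine ⟨(Quᵀ * Qv) *ᵥ v, ?_, ?_, ?_⟩
  · rw [dot_mulVec_left, Matrix.mulVec_mulVec]
    have : (Quᵀ * Qv)ᵀ * (Quᵀ * Qv) = 1 := by
      rw [Matrix.transpose_mul, Matrix.transpose_transpose, Matrix.mul_assoc,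
        ← Matrix.mul_assoc Qu, hQu.2, Matrix.one_mul, hQv.1]
    rw [this, Matrix.one_mulVec]
  · rw [← Matrix.mulVec_mulVec v Uᵀ V, dot_mulVec_left, Matrix.transpose_transpose]
  · have h1 : (Z * Qu) *ᵥ ((Quᵀ * Qv) *ᵥ v) = (Z * Qv) *ᵥ v := by
      rw [Matrix.mulVec_mulVec, Matrix.mul_assoc, ← Matrix.mul_assoc Qu, hQu.2, Matrix.one_mul]
    rw [Matrix.sub_mulVec, Matrix.sub_mulVec, h1]
    abel

lemma isUnit_det_of_mulVec_ne {d : ℕ} {B : Matrix (Fin d) (Fin d) ℝ}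
    (h : ∀ v : Fin d → ℝ, v ≠ 0 → B *ᵥ v ≠ 0) : IsUnit B.det := by
  have hpd : (Bᵀ * B).PosDef := by
    refine PosDef.of_dotProduct_mulVec_pos (psd_ata B).1 fun v hv => ?_
    have h1 : star v ⬝ᵥ (Bᵀ * B) *ᵥ v = (B *ᵥ v) ⬝ᵥ (B *ᵥ v) := by
      rw [star_trivial, ← Matrix.mulVec_mulVec, dot_mulVec_left, Matrix.transpose_transpose]
    rw [h1]
    have h2 : (B *ᵥ v) ⬝ᵥ (B *ᵥ v) ≠ 0 := by
      simpa [dotProduct_self_eq_zero] using h v hv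
    exact lt_of_le_of_ne (dot_self_nonneg _) (Ne.symm h2)
  have := hpd.det_pos
  rw [Matrix.det_mul, Matrix.det_transpose] at this
  rw [isUnit_iff_ne_zero]
  intro h0
  rw [h0, mul_zero] at this
  exact lt_irrefl _ this

end OptRot

open OptRot


set_option maxHeartbeats 2000000 in
/-- Under the hypotheses of the approximate alignment lemma, the
optimal rotations `Q = sgn(YᵀX)` and `Q̃ = sgn(ỸᵀX̃)` satisfy
`n ‖Q̃ - Q‖_F ≤ 9 √n · e_F`. -/
theorem optimal_rotation_stability {d n : ℕ} (Z X Y : Matrix (Fin n × Fin d) (Fin d) ℝ)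
    (hZ : BlockOrtho Z)
    (hXinv : ∀ i, IsUnit (blk X i).det) (hYinv : ∀ i, IsUnit (blk Y i).det)
    (ε eF : ℝ) (hε : ε ≤ 1 / (4 * Real.sqrt 2)) (heF : eF ≤ Real.sqrt n)
    (hXN : dF X Z ≤ 2 * ε * Real.sqrt n) (hYN : dF Y Z ≤ 2 * ε * Real.sqrt n)
    (hXtN : dF (bsgn X) Z ≤ 2 * ε * Real.sqrt n) (hYtN : dF (bsgn Y) Z ≤ 2 * ε * Real.sqrt n)
    (hXe : frob (X - bsgn X) ≤ eF) (hYe : frob (Y - bsgn Y) ≤ eF) :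
    (n : ℝ) * frob (msgn ((bsgn Y)ᵀ * bsgn X) - msgn (Yᵀ * X))
      ≤ 9 * Real.sqrt n * eF :=
  by
  classical
  rcases Nat.eq_zero_or_pos n with hn0 | hn
  · subst hn0
    have h1 : (9:ℝ) * Real.sqrt 0 * eF = 0 := by simp
    simp only [Nat.cast_zero, zero_mul, Nat.cast_ofNat]
    rw [h1]
  -- the positive-dimensional case
  set s := Real.sqrt n with hsdef
  have hs0 : 0 ≤ s := Real.sqrt_nonneg _
  have hs1 : 1 ≤ s := by
    rw [hsdef, show (1:ℝ) = Real.sqrt 1 by simp]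
    exact Real.sqrt_le_sqrt (by exact_mod_cast hn)
  have hs2 : s ^ 2 = (n : ℝ) := Real.sq_sqrt (Nat.cast_nonneg n)
  have hr2 : (1.414 : ℝ) ≤ Real.sqrt 2 := by
    nlinarith [Real.sq_sqrt (show (0:ℝ) ≤ 2 by norm_num), Real.sqrt_nonneg 2]
  have hr2' : (0:ℝ) < 4 * Real.sqrt 2 := by nlinarith
  have hε2 : ε * (4 * Real.sqrt 2) ≤ 1 := (le_div_iff₀ hr2').mp hε
  have heF0 : 0 ≤ eF := le_trans (frob_nonneg _) hXe
  set b : ℝ := 2 * ε * s + 1 / 48 with hbdef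
  have hb38 : b ≤ (3 / 8) * s := by
    rcases le_or_gt (ε * s) 0 with h | h
    · have : (1:ℝ)/48 ≤ (3/8) * s - 2 * (ε * s) := by nlinarith
      rw [hbdef]; nlinarith
    · have h4 : ε * s * (4 * Real.sqrt 2) ≤ s := by
        have := mul_le_mul_of_nonneg_right hε2 hs0
        nlinarith
      have h5 : ε * s * (4 * 1.414) ≤ ε * s * (4 * Real.sqrt 2) := by nlinarith
      rw [hbdef]; nlinarith
  obtain ⟨Qx, hQx, hQxe0⟩ := dF_extract (bsgn X) Z hXtN
  obtain ⟨Qy, hQy, hQye0⟩ := dF_extract (bsgn Y) Z hYtN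
  obtain ⟨Qx', hQx', hQxe0'⟩ := dF_extract X Z hXN
  obtain ⟨Qy', hQy', hQye0'⟩ := dF_extract Y Z hYN
  have hQxe : frob (bsgn X - Z * Qx) ≤ b := le_of_lt hQxe0
  have hQye : frob (bsgn Y - Z * Qy) ≤ b := le_of_lt hQye0
  have hQxe' : frob (X - Z * Qx') ≤ b := le_of_lt hQxe0'
  have hQye' : frob (Y - Z * Qy') ≤ b := le_of_lt hQye0'
  have hb0 : 0 ≤ b := le_trans (frob_nonneg _) hQxe
  clear hQxe0 hQye0 hQxe0' hQye0'
  clear_value s b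
  -- Gram matrices
  have hZg : Zᵀ * Z = (n : ℝ) • (1 : Matrix (Fin d) (Fin d) ℝ) :=
    gram_of_blocks fun i => (hZ i).1
  have hXtg : (bsgn X)ᵀ * bsgn X = (n : ℝ) • (1 : Matrix (Fin d) (Fin d) ℝ) :=
    gram_of_blocks fun i => by
    rw [blk_bsgn]; obtain ⟨P, -, -, h, -, -⟩ := msgn_spec (hXinv i); exact h
  have hYtg : (bsgn Y)ᵀ * bsgn Y = (n : ℝ) • (1 : Matrix (Fin d) (Fin d) ℝ) :=
    gram_of_blocks fun i => by
    rw [blk_bsgn]; obtain ⟨P, -, -, h, -, -⟩ := msgn_spec (hYinv i); exact h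
  set Xt := bsgn X with hXtdef
  set Yt := bsgn Y with hYtdef
  clear_value Xt Yt
  have hYtq : ∀ w : (Fin n × Fin d) → ℝ, (Ytᵀ *ᵥ w) ⬝ᵥ (Ytᵀ *ᵥ w) ≤ (n : ℝ) * (w ⬝ᵥ w) :=
    quad_of_gram Yt hYtg (Nat.cast_nonneg n)
  have hXtq : ∀ w : (Fin n × Fin d) → ℝ, (Xtᵀ *ᵥ w) ⬝ᵥ (Xtᵀ *ᵥ w) ≤ (n : ℝ) * (w ⬝ᵥ w) :=
    quad_of_gram Xt hXtg (Nat.cast_nonneg n)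
  have hXq : ∀ w : (Fin n × Fin d) → ℝ, (Xᵀ *ᵥ w) ⬝ᵥ (Xᵀ *ᵥ w) ≤ (4 * (n : ℝ)) * (w ⬝ᵥ w) := by
    intro w
    have hsplit : Xᵀ *ᵥ w = Xtᵀ *ᵥ w + (X - Xt)ᵀ *ᵥ w := by
      rw [Matrix.transpose_sub, Matrix.sub_mulVec]; abel
    have h1 : en (Xtᵀ *ᵥ w) ≤ s * en w := by
      have h0 := hXtq w
      have h2 : en (Xtᵀ *ᵥ w) ^ 2 ≤ (s * en w) ^ 2 := by
        rw [en_sq, mul_pow, hs2, en_sq]; exact h0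
      exact le_of_sq_le (en_nonneg _) (mul_nonneg hs0 (en_nonneg _)) h2
    have h2 : en ((X - Xt)ᵀ *ᵥ w) ≤ eF * en w := by
      calc en ((X - Xt)ᵀ *ᵥ w) ≤ frob (X - Xt)ᵀ * en w := en_mulVec_le _ _
        _ ≤ eF * en w := by
            rw [frob_transpose]
            exact mul_le_mul_of_nonneg_right hXe (en_nonneg _)
    have h3 : en (Xᵀ *ᵥ w) ≤ 2 * s * en w := by
      rw [hsplit]
      calc en (Xtᵀ *ᵥ w + (X - Xt)ᵀ *ᵥ w) ≤ en (Xtᵀ *ᵥ w) + en ((X - Xt)ᵀ *ᵥ w) := en_add_le _ _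
        _ ≤ s * en w + eF * en w := add_le_add h1 h2
        _ ≤ 2 * s * en w := by
            have := mul_le_mul_of_nonneg_right heF (en_nonneg w); linarith
    calc (Xᵀ *ᵥ w) ⬝ᵥ (Xᵀ *ᵥ w) = en (Xᵀ *ᵥ w) ^ 2 := (en_sq _).symm
      _ ≤ (2 * s * en w) ^ 2 := by
          have h5 : 0 ≤ 2 * s * en w := mul_nonneg (mul_nonneg (by norm_num) hs0) (en_nonneg w)
          nlinarith [en_nonneg (Xᵀ *ᵥ w)]
      _ = 4 * (n : ℝ) * (w ⬝ᵥ w) := by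
          rw [mul_pow, mul_pow, hs2, en_sq]; ring
  have hDB : frob (Ytᵀ * Xt - Yᵀ * X) ≤ 3 * s * eF := by
    have hsplit : Ytᵀ * Xt - Yᵀ * X = Ytᵀ * (Xt - X) + (Xᵀ * (Yt - Y))ᵀ := by
      rw [Matrix.transpose_mul, Matrix.transpose_transpose, Matrix.mul_sub,
        Matrix.transpose_sub, Matrix.sub_mul]
      abel
    have h1 : frob (Ytᵀ * (Xt - X)) ≤ s * eF := by
      have hq := frob_transpose_mul_le Yt (Xt - X) hYtq
      have h2 : frob (Ytᵀ * (Xt - X)) ^ 2 ≤ (s * eF) ^ 2 := by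
        rw [mul_pow, hs2]
        refine le_trans hq ?_
        have h3 : frob (Xt - X) ≤ eF := by rw [frob_sub_comm]; exact hXe
        have h4 : frob (Xt - X) ^ 2 ≤ eF ^ 2 := by nlinarith [frob_nonneg (Xt - X)]
        exact mul_le_mul_of_nonneg_left h4 (Nat.cast_nonneg n)
      exact le_of_sq_le (frob_nonneg _) (mul_nonneg hs0 heF0) h2
    have h2 : frob (Xᵀ * (Yt - Y)) ≤ 2 * s * eF := by
      have hq := frob_transpose_mul_le X (Yt - Y) hXq
      have h3 : frob (Yt - Y) ≤ eF := by rw [frob_sub_comm]; exact hYe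
      have h4 : frob (Xᵀ * (Yt - Y)) ^ 2 ≤ (2 * s * eF) ^ 2 := by
        rw [mul_pow, mul_pow, hs2]
        refine le_trans hq ?_
        have h5 : frob (Yt - Y) ^ 2 ≤ eF ^ 2 := by nlinarith [frob_nonneg (Yt - Y)]
        calc 4 * (n:ℝ) * frob (Yt - Y) ^ 2 ≤ 4 * (n:ℝ) * eF ^ 2 :=
              mul_le_mul_of_nonneg_left h5 (by positivity)
          _ = 2 ^ 2 * (n:ℝ) * eF ^ 2 := by ring
      exact le_of_sq_le (frob_nonneg _) (mul_nonneg (mul_nonneg (by norm_num) hs0) heF0) h4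
    calc frob (Ytᵀ * Xt - Yᵀ * X) = frob (Ytᵀ * (Xt - X) + (Xᵀ * (Yt - Y))ᵀ) := by rw [hsplit]
      _ ≤ frob (Ytᵀ * (Xt - X)) + frob (Xᵀ * (Yt - Y))ᵀ := frob_add_le _ _
      _ ≤ s * eF + 2 * s * eF := by
          rw [frob_transpose]; exact add_le_add h1 h2
      _ = 3 * s * eF := by ring
  have hn1 : (1:ℝ) ≤ (n:ℝ) := by exact_mod_cast hn
  -- generic alignment estimate
  have hmain : ∀ (U V : Matrix (Fin n × Fin d) (Fin d) ℝ) (Qu Qv : Matrix (Fin d) (Fin d) ℝ),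
      IsOrtho Qu → IsOrtho Qv → frob (U - Z * Qu) ≤ b → frob (V - Z * Qv) ≤ b →
      ∀ v : Fin d → ℝ, ∃ u : Fin d → ℝ, u ⬝ᵥ u = v ⬝ᵥ v ∧
        u ⬝ᵥ ((Uᵀ * V) *ᵥ v) = (U *ᵥ u) ⬝ᵥ (V *ᵥ v) ∧
        en (U *ᵥ u - V *ᵥ v) ≤ 2 * b * en v ∧
        U *ᵥ u = (Z * Qu) *ᵥ u + ((U - Z * Qu) *ᵥ u) := by
    intro U V Qu Qv hQu hQv hbu hbv v
    obtain ⟨u, hu1, hu2, hu3⟩ := align_dot Z U V hQu hQv v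
    have henu : en u = en v := by rw [en, en, hu1]
    refine ⟨u, hu1, hu2, ?_, by rw [Matrix.sub_mulVec]; abel⟩
    rw [hu3]
    calc en ((U - Z * Qu) *ᵥ u - (V - Z * Qv) *ᵥ v)
        ≤ en ((U - Z * Qu) *ᵥ u) + en ((V - Z * Qv) *ᵥ v) := en_sub_le _ _
      _ ≤ frob (U - Z * Qu) * en u + frob (V - Z * Qv) * en v :=
          add_le_add (en_mulVec_le _ _) (en_mulVec_le _ _)
      _ ≤ b * en v + b * en v := by
          rw [henu]
          exact add_le_add (mul_le_mul_of_nonneg_right hbu (en_nonneg v))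
            (mul_le_mul_of_nonneg_right hbv (en_nonneg v))
      _ = 2 * b * en v := by ring
  have hpolar : ∀ y x : (Fin n × Fin d) → ℝ,
      y ⬝ᵥ x = (y ⬝ᵥ y + x ⬝ᵥ x - (y - x) ⬝ᵥ (y - x)) / 2 := by
    intro y x
    have h1 : (y - x) ⬝ᵥ (y - x) = y ⬝ᵥ y - y ⬝ᵥ x - (x ⬝ᵥ y - x ⬝ᵥ x) := by
      rw [dotProduct_sub, sub_dotProduct, sub_dotProduct, dotProduct_comm x y]
    have h2 : x ⬝ᵥ y = y ⬝ᵥ x := dotProduct_comm x y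
    linarith
  have hgramdot : ∀ (U : Matrix (Fin n × Fin d) (Fin d) ℝ),
      Uᵀ * U = (n : ℝ) • (1 : Matrix (Fin d) (Fin d) ℝ) →
      ∀ u : Fin d → ℝ, (U *ᵥ u) ⬝ᵥ (U *ᵥ u) = (n : ℝ) * (u ⬝ᵥ u) := by
    intro U hU u
    rw [dot_mulVec_left, Matrix.mulVec_mulVec, hU, Matrix.smul_mulVec,
      Matrix.one_mulVec, smul_dotProduct, smul_eq_mul]
  have hBv : ∀ (M : Matrix (Fin d) (Fin d) ℝ) (v : Fin d → ℝ),
      v ⬝ᵥ (Mᵀ * M) *ᵥ v = (M *ᵥ v) ⬝ᵥ (M *ᵥ v) := by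
    intro M v
    rw [← Matrix.mulVec_mulVec, dot_mulVec_left, Matrix.transpose_transpose]
  -- quantitative singular value bound for `Bt = Ytᵀ * Xt`
  have hBtlow : ∀ v : Fin d → ℝ,
      (2 * (n:ℝ) / 3) ^ 2 * (v ⬝ᵥ v) ≤ v ⬝ᵥ ((Ytᵀ * Xt)ᵀ * (Ytᵀ * Xt)) *ᵥ v := by
    intro v
    obtain ⟨u, hu1, hu2, hu3, -⟩ := hmain Yt Xt Qy Qx hQy hQx hQye hQxe v
    have henu : en u = en v := by rw [en, en, hu1]
    have hyy : (Yt *ᵥ u) ⬝ᵥ (Yt *ᵥ u) = (n:ℝ) * (v ⬝ᵥ v) := by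
      rw [hgramdot Yt hYtg u, hu1]
    have hxx : (Xt *ᵥ v) ⬝ᵥ (Xt *ᵥ v) = (n:ℝ) * (v ⬝ᵥ v) := hgramdot Xt hXtg v
    have hyx2 : (Yt *ᵥ u - Xt *ᵥ v) ⬝ᵥ (Yt *ᵥ u - Xt *ᵥ v) ≤ 4 * b ^ 2 * (v ⬝ᵥ v) := by
      have h1 := hu3
      have h2 := en_sq (Yt *ᵥ u - Xt *ᵥ v)
      have h3 := en_sq v
      nlinarith [en_nonneg (Yt *ᵥ u - Xt *ᵥ v), en_nonneg v, hb0]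
    have hc1 : (2 * (n:ℝ) / 3) * (v ⬝ᵥ v) ≤ u ⬝ᵥ ((Ytᵀ * Xt) *ᵥ v) := by
      rw [hu2, hpolar (Yt *ᵥ u) (Xt *ᵥ v)]
      have hbn : 2 * b ^ 2 ≤ (n:ℝ) / 3 := by
        have hbb : b ^ 2 ≤ (3 / 8 * s) ^ 2 := pow_le_pow_left₀ hb0 hb38 2
        nlinarith [hs2, Nat.cast_nonneg (α := ℝ) n]
      have hbnv := mul_le_mul_of_nonneg_right hbn (dot_self_nonneg v)
      rw [hyy, hxx]
      linarith [hyx2, hbnv]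
    have hCS : u ⬝ᵥ ((Ytᵀ * Xt) *ᵥ v) ≤ en v * en ((Ytᵀ * Xt) *ᵥ v) := by
      have := dot_CS u ((Ytᵀ * Xt) *ᵥ v); rwa [henu] at this
    rw [hBv]
    have hc0 : 0 ≤ (2 * (n:ℝ) / 3) * (v ⬝ᵥ v) :=
      mul_nonneg (by positivity) (dot_self_nonneg v)
    have h8 : ((2 * (n:ℝ) / 3) * (v ⬝ᵥ v)) ^ 2 ≤ (en v * en ((Ytᵀ * Xt) *ᵥ v)) ^ 2 :=
      pow_le_pow_left₀ hc0 (le_trans hc1 hCS) 2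
    have h6 := en_sq v
    have h7 := en_sq ((Ytᵀ * Xt) *ᵥ v)
    rcases eq_or_lt_of_le (dot_self_nonneg v) with hv0 | hv0
    · rw [← hv0, mul_zero]
      exact dot_self_nonneg _
    · rw [mul_pow, mul_pow, h6, h7] at h8
      nlinarith [h8, hv0]
  have hn23 : (0:ℝ) < 2 * (n:ℝ) / 3 := by linarith
  have hdetBt : IsUnit (Ytᵀ * Xt).det := by
    apply isUnit_det_of_mulVec_ne
    intro v hv h0
    have h1 := hBtlow v
    rw [hBv, h0] at h1
    have hvv : 0 < v ⬝ᵥ v :=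
      lt_of_le_of_ne (dot_self_nonneg v) (Ne.symm (fun h => hv (dotProduct_self_eq_zero.mp h)))
    rw [dotProduct_zero] at h1
    have h2 := mul_pos (mul_pos hn23 hn23) hvv
    nlinarith [h1, h2]
  -- invertibility of `B = Yᵀ * X`
  have hsb : b ≤ s := by linarith [hb38, hs0]
  have hdetB : IsUnit (Yᵀ * X).det := by
    apply isUnit_det_of_mulVec_ne
    intro v hv h0
    obtain ⟨u, hu1, hu2, hu3, hu4⟩ := hmain Y X Qy' Qx' hQy' hQx' hQye' hQxe' v
    have henu : en u = en v := by rw [en, en, hu1]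
    have hvv : 0 < v ⬝ᵥ v :=
      lt_of_le_of_ne (dot_self_nonneg v) (Ne.symm (fun h => hv (dotProduct_self_eq_zero.mp h)))
    have hZQ : ∀ (Q : Matrix (Fin d) (Fin d) ℝ), IsOrtho Q →
        (Z * Q)ᵀ * (Z * Q) = (n : ℝ) • (1 : Matrix (Fin d) (Fin d) ℝ) := by
      intro Q hQ
      rw [Matrix.transpose_mul, Matrix.mul_assoc, ← Matrix.mul_assoc Zᵀ, hZg,
        Matrix.smul_mul, Matrix.mul_smul, Matrix.one_mul, hQ.1]
    have hlowy : (s - b) * en v ≤ en (Y *ᵥ u) := by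
      rw [hu4]
      have h1 : en ((Z * Qy') *ᵥ u) = s * en v := by
        have h2 := hgramdot (Z * Qy') (hZQ Qy' hQy') u
        rw [hu1] at h2
        rw [en, h2, hsdef, Real.sqrt_mul (Nat.cast_nonneg n)]
        rfl
      have h3 : en ((Y - Z * Qy') *ᵥ u) ≤ b * en v := by
        calc en ((Y - Z * Qy') *ᵥ u) ≤ frob (Y - Z * Qy') * en u := en_mulVec_le _ _
          _ ≤ b * en v := by
              rw [henu]; exact mul_le_mul_of_nonneg_right hQye' (en_nonneg v)
      have h4 := en_lower ((Z * Qy') *ᵥ u) ((Y - Z * Qy') *ᵥ u)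
      rw [h1] at h4
      nlinarith
    have hlowx : (s - b) * en v ≤ en (X *ᵥ v) := by
      have hsplit : X *ᵥ v = (Z * Qx') *ᵥ v + ((X - Z * Qx') *ᵥ v) := by
        rw [Matrix.sub_mulVec]; abel
      rw [hsplit]
      have h1 : en ((Z * Qx') *ᵥ v) = s * en v := by
        have h2 := hgramdot (Z * Qx') (hZQ Qx' hQx') v
        rw [en, h2, hsdef, Real.sqrt_mul (Nat.cast_nonneg n)]
        rfl
      have h3 : en ((X - Z * Qx') *ᵥ v) ≤ b * en v := by
        calc en ((X - Z * Qx') *ᵥ v) ≤ frob (X - Z * Qx') * en v := en_mulVec_le _ _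
          _ ≤ b * en v := mul_le_mul_of_nonneg_right hQxe' (en_nonneg v)
      have h4 := en_lower ((Z * Qx') *ᵥ v) ((X - Z * Qx') *ᵥ v)
      rw [h1] at h4
      nlinarith
    have hsb0 : 0 ≤ (s - b) * en v := mul_nonneg (by linarith) (en_nonneg v)
    have hyy : (s - b) ^ 2 * (v ⬝ᵥ v) ≤ (Y *ᵥ u) ⬝ᵥ (Y *ᵥ u) := by
      have h5 := pow_le_pow_left₀ hsb0 hlowy 2
      rw [mul_pow, en_sq, en_sq] at h5
      exact h5
    have hxx : (s - b) ^ 2 * (v ⬝ᵥ v) ≤ (X *ᵥ v) ⬝ᵥ (X *ᵥ v) := by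
      have h5 := pow_le_pow_left₀ hsb0 hlowx 2
      rw [mul_pow, en_sq, en_sq] at h5
      exact h5
    have hyx2 : (Y *ᵥ u - X *ᵥ v) ⬝ᵥ (Y *ᵥ u - X *ᵥ v) ≤ 4 * b ^ 2 * (v ⬝ᵥ v) := by
      have h2 := en_sq (Y *ᵥ u - X *ᵥ v)
      have h3 := en_sq v
      nlinarith [en_nonneg (Y *ᵥ u - X *ᵥ v), en_nonneg v, hb0]
    have hpos : 0 < u ⬝ᵥ ((Yᵀ * X) *ᵥ v) := by
      rw [hu2, hpolar (Y *ᵥ u) (X *ᵥ v)]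
      have hkey : 2 * (s - b) ^ 2 - 4 * b ^ 2 > 0 := by nlinarith
      nlinarith
    rw [h0] at hpos
    simp only [dotProduct, Pi.zero_apply, mul_zero, Finset.sum_const_zero] at hpos
    exact lt_irrefl _ hpos
  obtain ⟨P, hPsd, hPP, hQo, hQB, hQP⟩ := msgn_spec hdetB
  obtain ⟨Pt, hPtsd, hPtPt, hQto, hQtBt, hQtPt⟩ := msgn_spec hdetBt
  set Q := msgn (Yᵀ * X) with hQdef
  set Qt := msgn (Ytᵀ * Xt) with hQtdef
  set D := Qt - Q with hDdef
  clear_value Q Qt D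
  have hPt : (Pt - (2 * (n:ℝ) / 3) • (1 : Matrix (Fin d) (Fin d) ℝ)).PosSemidef := by
    refine psd_sub_smul hPtsd (le_of_lt hn23) ?_
    intro v
    rw [hPtPt]
    exact hBtlow v
  have hPtt : Ptᵀ = Pt := by
    rw [← Matrix.conjTranspose_eq_transpose_of_trivial]; exact hPtsd.1
  have hPts : Pᵀ = P := by
    rw [← Matrix.conjTranspose_eq_transpose_of_trivial]; exact hPsd.1
  have hS : (Dᵀ * D).PosSemidef := psd_ata D
  have htrS : Matrix.trace (Dᵀ * D) = frob D ^ 2 := by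
    rw [OptRot.trace_transpose_mul, frob_sq]
    exact Finset.sum_congr rfl fun i _ => Finset.sum_congr rfl fun j _ => (pow_two _).symm
  have e3gen : ∀ R : Matrix (Fin d) (Fin d) ℝ, Rᵀ = R →
      Matrix.trace ((Qtᵀ * Q) * R) = Matrix.trace ((Qᵀ * Qt) * R) := by
    intro R hR
    conv_lhs => rw [← Matrix.trace_transpose]
    rw [Matrix.transpose_mul, Matrix.transpose_mul, Matrix.transpose_transpose, hR,
      Matrix.trace_mul_comm]
  have eS : Dᵀ * D = (Qtᵀ * Qt + Qᵀ * Q) - (Qtᵀ * Q + Qᵀ * Qt) := by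
    rw [hDdef, Matrix.transpose_sub, Matrix.sub_mul, Matrix.mul_sub, Matrix.mul_sub]
    abel
  have eSBt : Matrix.trace (Dᵀ * (Ytᵀ * Xt)) * 2 = Matrix.trace ((Dᵀ * D) * Pt) := by
    have h1 : Dᵀ * (Ytᵀ * Xt) = Qtᵀ * (Ytᵀ * Xt) - Qᵀ * (Ytᵀ * Xt) := by
      rw [hDdef, Matrix.transpose_sub, Matrix.sub_mul]
    have h2 : Qᵀ * (Ytᵀ * Xt) = (Qᵀ * Qt) * Pt := by rw [← hQtPt, Matrix.mul_assoc]
    have h3 : (Dᵀ * D) * Pt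
        = ((Qtᵀ * Qt) * Pt + (Qᵀ * Q) * Pt) - ((Qtᵀ * Q) * Pt + (Qᵀ * Qt) * Pt) := by
      rw [eS, Matrix.sub_mul, Matrix.add_mul, Matrix.add_mul]
    rw [h1, h2, hQtBt, h3, hQto, hQo, Matrix.one_mul]
    rw [Matrix.trace_sub, Matrix.trace_sub, Matrix.trace_add, Matrix.trace_add, e3gen Pt hPtt]
    ring
  have eSB : Matrix.trace (Dᵀ * (Yᵀ * X)) * 2 = - Matrix.trace ((Dᵀ * D) * P) := by
    have h1 : Dᵀ * (Yᵀ * X) = Qtᵀ * (Yᵀ * X) - Qᵀ * (Yᵀ * X) := by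
      rw [hDdef, Matrix.transpose_sub, Matrix.sub_mul]
    have h2 : Qtᵀ * (Yᵀ * X) = (Qtᵀ * Q) * P := by rw [← hQP, Matrix.mul_assoc]
    have h3 : (Dᵀ * D) * P
        = ((Qtᵀ * Qt) * P + (Qᵀ * Q) * P) - ((Qtᵀ * Q) * P + (Qᵀ * Qt) * P) := by
      rw [eS, Matrix.sub_mul, Matrix.add_mul, Matrix.add_mul]
    rw [h1, h2, hQB, h3, hQto, hQo, Matrix.one_mul]
    rw [Matrix.trace_sub, Matrix.trace_sub, Matrix.trace_add, Matrix.trace_add, e3gen P hPts]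
    ring
  have hCS2 : Matrix.trace (Dᵀ * ((Ytᵀ * Xt) - (Yᵀ * X))) ≤ frob D * (3 * s * eF) := by
    calc Matrix.trace (Dᵀ * ((Ytᵀ * Xt) - (Yᵀ * X)))
        ≤ frob D * frob ((Ytᵀ * Xt) - (Yᵀ * X)) := trace_CS _ _
      _ ≤ frob D * (3 * s * eF) := mul_le_mul_of_nonneg_left hDB (frob_nonneg D)
  have hlb : (2 * (n:ℝ) / 3) * frob D ^ 2 ≤ Matrix.trace (Dᵀ * (Ytᵀ * Xt)) * 2 := by
    rw [eSBt, ← htrS]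
    exact psd_trace_mul_ge hS hPt
  have hub0 : Matrix.trace (Dᵀ * (Yᵀ * X)) * 2 ≤ 0 := by
    rw [eSB]
    have := psd_trace_mul_nonneg hS hPsd
    linarith
  have hsplit2 : Matrix.trace (Dᵀ * ((Ytᵀ * Xt) - (Yᵀ * X)))
      = Matrix.trace (Dᵀ * (Ytᵀ * Xt)) - Matrix.trace (Dᵀ * (Yᵀ * X)) := by
    rw [Matrix.mul_sub, Matrix.trace_sub]
  have hfinal : (2 * (n:ℝ) / 3) * frob D ^ 2 ≤ 2 * (frob D * (3 * s * eF)) := by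
    linarith [hlb, hub0, hCS2, hsplit2]
  rcases eq_or_lt_of_le (frob_nonneg D) with hD0 | hD0
  · rw [← hD0, mul_zero]
    exact mul_nonneg (mul_nonneg (by norm_num) hs0) heF0
  · nlinarith [hD0, hfinal]






end
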